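/- arXiv:1101.5820 — 7 statements merged into one kernel-verified Lean document; each statement's English description precedes it below -/
import Mathlib

section
/- If the strict-order relation R = {(x,y) ∈ X² : x < y} of a partially ordered topological space X is open in X², then the collection 𝒮 of closed lower subsets of X is a closed subset of the space of closed subsets of X with the Fell topology. -/
open Set TopologicalSpace

/-- The Fell topology on the space of topologically closed subsets of `X`. -/
def fellTopology (X : Type*) [TopologicalSpace X] :
    TopologicalSpace {F : Set X // IsClosed F} :=
  TopologicalSpace.generateFrom
    ({W | ∃ U : Set X, IsOpen U ∧ W = {F : {F : Set X // IsClosed F} | (F.1 ∩ U).Nonempty}} ∪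
     {W | ∃ K : Set X, IsCompact K ∧ W = {F : {F : Set X // IsClosed F} | F.1 ∩ K = ∅}})

/-- `H` is a lower set with respect to the strict order: `x ∈ H` and `y < x` imply `y ∈ H`. -/
def IsLowerLt {X : Type*} [LT X] (H : Set X) : Prop :=
  ∀ ⦃x⦄, x ∈ H → ∀ ⦃y⦄, y < x → y ∈ H

/-- If the strict-order relation is open in `X²`, then the collection of closed lower
subsets of `X` is a closed subset of the space of closed subsets with the Fell topology. -/
theorem lowerSets_isClosed_in_fell (X : Type*) [TopologicalSpace X] [PartialOrder X]
    (hR : IsOpen {p : X × X | p.1 < p.2}) :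
    @IsClosed _ (fellTopology X) {F : {F : Set X // IsClosed F} | IsLowerLt F.1} := by
  letI := fellTopology X
  rw [← isOpen_compl_iff]
  have key : {F : {F : Set X // IsClosed F} | IsLowerLt F.1}ᶜ =
      ⋃ y : X, ({F : {F : Set X // IsClosed F} | (F.1 ∩ {z | y < z}).Nonempty} ∩
        {F : {F : Set X // IsClosed F} | F.1 ∩ ({y} : Set X) = ∅}) := by
    ext F
    simp only [mem_compl_iff, mem_setOf_eq, mem_iUnion, mem_inter_iff, IsLowerLt]
    constructor
    · intro h
      push_neg at h
      obtain ⟨x, hx, y, hyx, hy⟩ := h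
      refine ⟨y, ⟨x, hx, hyx⟩, Set.eq_empty_iff_forall_notMem.mpr ?_⟩
      rintro z ⟨hz, rfl⟩
      exact hy hz
    · rintro ⟨y, ⟨x, hx, hyx⟩, hy⟩ h
      exact Set.eq_empty_iff_forall_notMem.mp hy y ⟨h hx hyx, rfl⟩
  rw [key]
  apply isOpen_iUnion
  intro y
  apply IsOpen.inter
  · exact TopologicalSpace.GenerateOpen.basic _
      (Or.inl ⟨{z | y < z}, hR.preimage (Continuous.prodMk_right y), rfl⟩)
  · exact TopologicalSpace.GenerateOpen.basic _
      (Or.inr ⟨{y}, isCompact_singleton, rfl⟩)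
end

section
/- Suppose the strict-order relation of X is open in X² and every point x of X lies in the closure of its strict down-set {y : y < x}. Then the space 𝒮 of closed lower subsets of X, with the subspace topology induced from the Fell topology, is Hausdorff. -/
open Set TopologicalSpace

/-- The space `𝒮` of topologically closed lower subsets of `X`. -/
def SSpace (X : Type*) [TopologicalSpace X] [LT X] : Type _ :=
  {S : Set X // IsClosed S ∧ IsLowerLt S}

/-- The topology on `𝒮` generated by the sets `V_U = {S : S ∩ U ≠ ∅}` for `U` open and
`V^K = {S : S ∩ K = ∅}` for `K` compact. -/
def STopology (X : Type*) [TopologicalSpace X] [LT X] : TopologicalSpace (SSpace X) :=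
  TopologicalSpace.generateFrom
    ({W | ∃ U : Set X, IsOpen U ∧ W = {S : SSpace X | (S.1 ∩ U).Nonempty}} ∪
     {W | ∃ K : Set X, IsCompact K ∧ W = {S : SSpace X | S.1 ∩ K = ∅}})

/-- Key separation lemma: if `x ∈ S \ T`, we can separate `S` from `T` by disjoint
open sets in `STopology X`. -/
lemma sspace_sep {X : Type*} [TopologicalSpace X] [PartialOrder X]
    (hR : IsOpen {p : X × X | p.1 < p.2})
    (hsb : ∀ x : X, x ∈ closure {y | y < x})
    (S T : SSpace X) {x : X} (hxS : x ∈ S.1) (hxT : x ∉ T.1) :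
    ∃ u v : Set (SSpace X), @IsOpen _ (STopology X) u ∧ @IsOpen _ (STopology X) v ∧
      S ∈ u ∧ T ∈ v ∧ Disjoint u v := by
  have hTc : IsOpen T.1ᶜ := T.2.1.isOpen_compl
  obtain ⟨y, hyT, hyx⟩ := mem_closure_iff.mp (hsb x) _ hTc hxT
  obtain ⟨U, V, hU, hV, hyU, hxV, hUV⟩ := isOpen_prod_iff.mp hR y x hyx
  refine ⟨{A : SSpace X | (A.1 ∩ V).Nonempty}, {A : SSpace X | A.1 ∩ {y} = ∅},
    TopologicalSpace.GenerateOpen.basic _ (Or.inl ⟨V, hV, rfl⟩),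
    TopologicalSpace.GenerateOpen.basic _ (Or.inr ⟨{y}, isCompact_singleton, rfl⟩),
    ⟨x, hxS, hxV⟩, ?_, ?_⟩
  · simp only [Set.mem_setOf_eq]
    apply Set.eq_empty_iff_forall_notMem.mpr
    rintro z ⟨hzT, rfl⟩
    exact hyT hzT
  · rw [Set.disjoint_left]
    rintro A ⟨a, haA, haV⟩ hA
    have hya : y < a := hUV (Set.mk_mem_prod hyU haV)
    have : y ∈ A.1 := A.2.2 haA hya
    have : y ∈ A.1 ∩ {y} := ⟨this, rfl⟩
    simp only [Set.mem_setOf_eq] at hA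
    rw [hA] at this
    exact this

/-- If the strict-order relation is open and every point lies in the closure of its strict
down-set, then the space of closed lower subsets of `X` with the topology generated by the
sets `V_U` and `V^K` is Hausdorff. -/
theorem sspace_t2 (X : Type*) [TopologicalSpace X] [PartialOrder X]
    (hR : IsOpen {p : X × X | p.1 < p.2})
    (hsb : ∀ x : X, x ∈ closure {y | y < x}) :
    @T2Space (SSpace X) (STopology X) := by
  letI := STopology X
  constructor
  intro S T hST
  have h : ¬ S.1 ⊆ T.1 ∨ ¬ T.1 ⊆ S.1 := by
    by_contra h
    push_neg at h
    exact hST (Subtype.ext (le_antisymm h.1 h.2))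
  rcases h with h | h
  · obtain ⟨x, hxS, hxT⟩ := Set.not_subset.mp h
    obtain ⟨u, v, hu, hv, hSu, hTv, hdisj⟩ := sspace_sep hR hsb S T hxS hxT
    exact ⟨u, v, hu, hv, hSu, hTv, hdisj⟩
  · obtain ⟨x, hxT, hxS⟩ := Set.not_subset.mp h
    obtain ⟨u, v, hu, hv, hTu, hSv, hdisj⟩ := sspace_sep hR hsb T S hxT hxS
    exact ⟨v, u, hv, hu, hSv, hTu, hdisj.symm⟩
end

section
/- Under the assumptions that the strict-order relation is open and every point is in the closure of its strict down-set, if X₀ is a dense subset of X and S₁, S₂ are closed lower subsets of X with S₁ ∩ X₀ = S₂ ∩ X₀, then S₁ = S₂. -/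
open Set TopologicalSpace

lemma closedLower_subset_aux {X : Type*} [TopologicalSpace X] [PartialOrder X]
    (hR : IsOpen {p : X × X | p.1 < p.2})
    (hsb : ∀ x : X, x ∈ closure {y | y < x})
    (X₀ : Set X) (hX₀ : Dense X₀)
    (S₁ S₂ : Set X)
    (h₁l : IsLowerLt S₁)
    (h₂c : IsClosed S₂)
    (h : S₁ ∩ X₀ ⊆ S₂) : S₁ ⊆ S₂ := by
  intro x hx
  rw [← h₂c.closure_eq]
  rw [mem_closure_iff]
  intro U hU hxU
  have hy := mem_closure_iff.1 (hsb x) U hU hxU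
  obtain ⟨y, hyU, hyx⟩ := hy
  obtain ⟨V, W, hV, hW, hyV, hxW, hVW⟩ :=
    isOpen_prod_iff.1 hR y x hyx
  have hopen : IsOpen (U ∩ V) := hU.inter hV
  have hne : (U ∩ V).Nonempty := ⟨y, hyU, hyV⟩
  obtain ⟨z, hzX₀, hzU, hzV⟩ := hX₀.exists_mem_open hopen hne
  have hzx : z < x := hVW (mk_mem_prod hzV hxW)
  exact ⟨z, hzU, h ⟨h₁l hx hzx, hzX₀⟩⟩

/-- If the strict-order relation is open, every point lies in the closure of its strict
down-set, and `X₀` is dense, then closed lower sets agreeing on `X₀` are equal. -/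
theorem closedLower_eq_of_dense_agree (X : Type*) [TopologicalSpace X] [PartialOrder X]
    (hR : IsOpen {p : X × X | p.1 < p.2})
    (hsb : ∀ x : X, x ∈ closure {y | y < x})
    (X₀ : Set X) (hX₀ : Dense X₀)
    (S₁ S₂ : Set X)
    (h₁c : IsClosed S₁) (h₁l : IsLowerLt S₁)
    (h₂c : IsClosed S₂) (h₂l : IsLowerLt S₂)
    (h : S₁ ∩ X₀ = S₂ ∩ X₀) : S₁ = S₂ := by
  apply Set.Subset.antisymm
  · exact closedLower_subset_aux hR hsb X₀ hX₀ S₁ S₂ h₁l h₂c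
      (h ▸ Set.inter_subset_left)
  · exact closedLower_subset_aux hR hsb X₀ hX₀ S₂ S₁ h₂l h₁c
      (h ▸ Set.inter_subset_left)
end

section
/- Under the assumptions that the strict-order relation is open and every point is in the closure of its strict down-set, for every x ∈ X and every dense subset X₀ of X, the set V^x = {S ∈ 𝒮 : x ∉ S} equals the union over y ∈ X₀ with y < x of the sets V^y = {S ∈ 𝒮 : y ∉ S}. -/
open Set TopologicalSpace

/-- `V^x = ⋃_{y ∈ X₀, y < x} V^y` for any dense `X₀`, assuming the strict order relation
is open and every point lies in the closure of its strict down-set. -/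
theorem vx_eq_iUnion (X : Type*) [TopologicalSpace X] [PartialOrder X]
    (hR : IsOpen {p : X × X | p.1 < p.2})
    (hsb : ∀ x : X, x ∈ closure {y | y < x})
    (X₀ : Set X) (hX₀ : Dense X₀) (x : X) :
    {S : SSpace X | x ∉ S.1} = ⋃ y ∈ {y ∈ X₀ | y < x}, {S : SSpace X | y ∉ S.1} := by
  ext S
  simp only [mem_setOf_eq, mem_iUnion, exists_prop, mem_sep_iff]
  constructor
  · intro hxS
    -- the strict down-set of x is open
    have hopen : IsOpen {y : X | y < x} := by
      have : Continuous fun y : X => ((y, x) : X × X) := by continuity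
      exact hR.preimage this
    -- Sᶜ is open and contains x, and x is in the closure of {y | y < x}
    have hU : IsOpen ((S.1)ᶜ ∩ {y : X | y < x}) := S.2.1.isOpen_compl.inter hopen
    have hne : ((S.1)ᶜ ∩ {y : X | y < x}).Nonempty := by
      have := (mem_closure_iff.mp (hsb x)) _ S.2.1.isOpen_compl hxS
      obtain ⟨y, hy1, hy2⟩ := this
      exact ⟨y, hy1, hy2⟩
    obtain ⟨y, hyU, hyX₀⟩ := hX₀.inter_open_nonempty _ hU hne
    exact ⟨y, ⟨hyX₀, hyU.2⟩, hyU.1⟩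
  · rintro ⟨y, ⟨-, hylt⟩, hyS⟩
    intro hxS
    exact hyS (S.2.2 hxS hylt)
end

section
/- Under the assumptions that the strict-order relation is open and every point is in the closure of its strict down-set, for every open set U ⊆ X and every dense subset X₀ of X, the set V_U = {S ∈ 𝒮 : S ∩ U ≠ ∅} equals the union over y ∈ U ∩ X₀ of the complements of V^y, i.e. V_U = ⋃_{y ∈ U ∩ X₀} {S ∈ 𝒮 : y ∈ S}. -/
open Set TopologicalSpace

/-- `V_U = ⋃_{y ∈ U ∩ X₀} ¬V^y` for any open `U` and dense `X₀`, assuming the strict order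
relation is open and every point lies in the closure of its strict down-set. -/
theorem vU_eq_iUnion (X : Type*) [TopologicalSpace X] [PartialOrder X]
    (hR : IsOpen {p : X × X | p.1 < p.2})
    (hsb : ∀ x : X, x ∈ closure {y | y < x})
    (X₀ : Set X) (hX₀ : Dense X₀) (U : Set X) (hU : IsOpen U) :
    {S : SSpace X | (S.1 ∩ U).Nonempty} = ⋃ y ∈ U ∩ X₀, {S : SSpace X | y ∈ S.1} := by
  ext S
  simp only [mem_setOf_eq, mem_iUnion, exists_prop]
  constructor
  · rintro ⟨x, hxS, hxU⟩
    have hopen' : IsOpen {y : X | y < x} := by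
      have : {y : X | y < x} = (fun y => (y, x)) ⁻¹' {p : X × X | p.1 < p.2} := rfl
      rw [this]
      exact hR.preimage (by fun_prop)
    have hne : (U ∩ {y : X | y < x}).Nonempty := by
      have := hsb x
      rw [mem_closure_iff] at this
      exact this U hU hxU
    obtain ⟨y, hy⟩ := hX₀.inter_open_nonempty _ (hU.inter hopen') hne
    exact ⟨y, ⟨hy.1.1, hy.2⟩, S.2.2 hxS hy.1.2⟩
  · rintro ⟨y, ⟨hyU, _⟩, hyS⟩
    exact ⟨y, hyS, hyU⟩
end

section
/- Under the assumptions that the strict-order relation is open, every point is in the closure of its strict down-set, and X₀ ⊆ X is dense, the Borel σ-algebra of the space 𝒮 of closed lower subsets of X is generated by the countable family of events V^y = {S : y ∉ S}, y ∈ X₀. -/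
open Set TopologicalSpace

/-- Under the standing assumptions, the Borel σ-algebra of the space of closed lower
subsets of `X` is generated by the events `V^y = {S : y ∉ S}` for `y` in a dense `X₀`. -/
theorem sspace_borel_generated
    (X : Type*) [TopologicalSpace X] [SecondCountableTopology X] [PartialOrder X]
    (hR : IsOpen {p : X × X | p.1 < p.2})
    (hsb : ∀ x : X, x ∈ closure {y | y < x})
    (X₀ : Set X) (hX₀ : Dense X₀) :
    @borel (SSpace X) (STopology X) =
      MeasurableSpace.generateFrom {A : Set (SSpace X) | ∃ y ∈ X₀, A = {S | y ∉ S.1}} := by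
  classical
  obtain ⟨b, hbc, -, hb⟩ := exists_countable_basis X
  obtain ⟨D, hDX₀, hDc, hDd⟩ := hX₀.exists_countable_dense_subset
  set C : Set (Set (SSpace X)) :=
    ((fun U => {S : SSpace X | (S.1 ∩ U).Nonempty}) '' b) ∪
    ((fun d => {S : SSpace X | d ∉ S.1}) '' D) with hCdef
  have hCc : C.Countable := (hbc.image _).union (hDc.image _)
  -- key geometric lemma
  have key : ∀ (x : X) (O : Set X), IsOpen O → x ∈ O →
      ∃ d ∈ D ∩ O, ∃ B ∈ b, x ∈ B ∧ ∀ z ∈ B, d < z := by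
    intro x O hO hxO
    obtain ⟨y, hyO, hyx⟩ := mem_closure_iff.1 (hsb x) O hO hxO
    obtain ⟨u, v, hu, hv, hyu, hxv, huv⟩ := isOpen_prod_iff.1 hR y x hyx
    obtain ⟨B, hBb, hxB, hBv⟩ := hb.exists_subset_of_mem_open hxv hv
    obtain ⟨d, ⟨hdu, hdO⟩, hdD⟩ :=
      hDd.inter_open_nonempty (u ∩ O) (hu.inter hO) ⟨y, hyu, hyO⟩
    exact ⟨d, ⟨hdD, hdO⟩, B, hBb, hxB, fun z hz => huv (Set.mk_mem_prod hdu (hBv hz))⟩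
  -- descriptions of the generators
  have hVU_eq : ∀ U : Set X, IsOpen U →
      {S : SSpace X | (S.1 ∩ U).Nonempty} = ⋃ d ∈ D ∩ U, {S : SSpace X | d ∉ S.1}ᶜ := by
    intro U hU
    ext S
    simp only [mem_setOf_eq, mem_iUnion, mem_compl_iff, not_not, exists_prop]
    constructor
    · rintro ⟨x, hxS, hxU⟩
      obtain ⟨d, hdDU, B, hBb, hxB, hlt⟩ := key x U hU hxU
      exact ⟨d, hdDU, S.2.2 hxS (hlt x hxB)⟩
    · rintro ⟨d, ⟨hdD, hdU⟩, hdS⟩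
      exact ⟨d, hdS, hdU⟩
  -- the topology is generated by the countable family `C`
  have hTopEq : STopology X = TopologicalSpace.generateFrom C := by
    refine le_antisymm (le_generateFrom ?easy) (le_generateFrom ?hard)
    case easy =>
      rintro s (⟨U, hUb, rfl⟩ | ⟨d, hdD, rfl⟩)
      · exact TopologicalSpace.GenerateOpen.basic _ (Or.inl ⟨U, hb.isOpen hUb, rfl⟩)
      · show @IsOpen (SSpace X) (STopology X) {S : SSpace X | d ∉ S.1}
        have hEq : {S : SSpace X | d ∉ S.1} = {S : SSpace X | S.1 ∩ {d} = ∅} := by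
          ext S; simp [Set.inter_singleton_eq_empty]
        rw [hEq]
        exact TopologicalSpace.GenerateOpen.basic _ (Or.inr ⟨{d}, isCompact_singleton, rfl⟩)
    case hard =>
      rintro s (⟨U, hU, rfl⟩ | ⟨K, hK, rfl⟩)
      · -- `V_U` is a union of `V_B` for basic `B ⊆ U`
        have hUeq : {S : SSpace X | (S.1 ∩ U).Nonempty} =
            ⋃₀ {T | ∃ B ∈ b, B ⊆ U ∧ T = {S : SSpace X | (S.1 ∩ B).Nonempty}} := by
          ext S
          simp only [mem_setOf_eq, mem_sUnion]
          constructor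
          · rintro ⟨x, hxS, hxU⟩
            obtain ⟨B, hBb, hxB, hBU⟩ := hb.exists_subset_of_mem_open hxU hU
            exact ⟨_, ⟨B, hBb, hBU, rfl⟩, ⟨x, hxS, hxB⟩⟩
          · rintro ⟨T, ⟨B, hBb, hBU, rfl⟩, x, hxS, hxB⟩
            exact ⟨x, hxS, hBU hxB⟩
        rw [hUeq]
        refine TopologicalSpace.GenerateOpen.sUnion _ ?_
        rintro T ⟨B, hBb, hBU, rfl⟩
        exact TopologicalSpace.GenerateOpen.basic _ (Or.inl ⟨B, hBb, rfl⟩)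
      · -- `V^K` is a union of finite intersections of events
        have hVKeq : {S : SSpace X | S.1 ∩ K = ∅} =
            ⋃₀ {T | ∃ F : Set (X × Set X), F.Finite ∧
                (∀ p ∈ F, p.1 ∈ D ∧ p.2 ∈ b ∧ ∀ z ∈ p.2, p.1 < z) ∧
                K ⊆ (⋃ p ∈ F, p.2) ∧
                T = ⋂ p ∈ F, {S : SSpace X | p.1 ∉ S.1}} := by
          ext S
          simp only [mem_setOf_eq, mem_sUnion]
          constructor
          · intro hSK
            have hx : ∀ x ∈ K, ∃ q : {q : X × Set X // q.1 ∈ D ∧ q.2 ∈ b ∧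
                (∀ z ∈ q.2, q.1 < z) ∧ q.1 ∉ S.1}, x ∈ q.1.2 := by
              intro x hxK
              have hxS : x ∈ S.1ᶜ := by
                intro hxS
                exact absurd hSK (Set.nonempty_iff_ne_empty.mp ⟨x, hxS, hxK⟩)
              obtain ⟨d, ⟨hdD, hdO⟩, B, hBb, hxB, hlt⟩ :=
                key x S.1ᶜ S.2.1.isOpen_compl hxS
              exact ⟨⟨(d, B), hdD, hBb, hlt, hdO⟩, hxB⟩
            obtain ⟨t, ht⟩ := hK.elim_finite_subcover
              (fun q : {q : X × Set X // q.1 ∈ D ∧ q.2 ∈ b ∧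
                  (∀ z ∈ q.2, q.1 < z) ∧ q.1 ∉ S.1} => q.1.2)
              (fun q : {q : X × Set X // q.1 ∈ D ∧ q.2 ∈ b ∧
                  (∀ z ∈ q.2, q.1 < z) ∧ q.1 ∉ S.1} => hb.isOpen q.2.2.1)
              (fun x hxK => mem_iUnion.2 (hx x hxK))
            refine ⟨_, ⟨(fun q : {q : X × Set X // q.1 ∈ D ∧ q.2 ∈ b ∧
                  (∀ z ∈ q.2, q.1 < z) ∧ q.1 ∉ S.1} => q.1) '' (t : Set _),
              (t.finite_toSet.image _), ?_, ?_, rfl⟩, ?_⟩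
            · rintro p ⟨q, -, rfl⟩
              exact ⟨q.2.1, q.2.2.1, q.2.2.2.1⟩
            · intro x hxK
              obtain ⟨q, hqt, hxq⟩ := mem_iUnion₂.1 (ht hxK)
              exact mem_iUnion₂.2 ⟨q.1, ⟨q, hqt, rfl⟩, hxq⟩
            · refine mem_iInter₂.2 ?_
              rintro p ⟨q, -, rfl⟩
              exact q.2.2.2.2
          · rintro ⟨T, ⟨F, hFfin, hFprop, hFcov, rfl⟩, hST⟩
            rw [eq_empty_iff_forall_notMem]
            rintro x ⟨hxS, hxK⟩
            obtain ⟨p, hpF, hxp⟩ := mem_iUnion₂.1 (hFcov hxK)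
            exact (mem_iInter₂.1 hST p hpF) (S.2.2 hxS ((hFprop p hpF).2.2 x hxp))
        rw [hVKeq]
        refine TopologicalSpace.GenerateOpen.sUnion _ ?_
        rintro T ⟨F, hFfin, hFprop, hFcov, rfl⟩
        show @IsOpen (SSpace X) (TopologicalSpace.generateFrom C) (⋂ p ∈ F, {S : SSpace X | p.1 ∉ S.1})
        letI := TopologicalSpace.generateFrom C
        exact hFfin.isOpen_biInter fun p hp =>
          TopologicalSpace.isOpen_generateFrom_of_mem (Or.inr ⟨p.1, (hFprop p hp).1, rfl⟩)
  haveI hSC : @SecondCountableTopology (SSpace X) (TopologicalSpace.generateFrom C) :=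
    @SecondCountableTopology.mk _ (TopologicalSpace.generateFrom C) ⟨C, hCc, rfl⟩
  have hBorel : @borel (SSpace X) (STopology X) = MeasurableSpace.generateFrom C := by
    rw [hTopEq]
    exact @borel_eq_generateFrom_of_subbasis _ C (TopologicalSpace.generateFrom C) hSC rfl
  rw [hBorel]
  refine le_antisymm (MeasurableSpace.generateFrom_le ?_) (MeasurableSpace.generateFrom_le ?_)
  · rintro s (⟨U, hUb, rfl⟩ | ⟨d, hdD, rfl⟩)
    · letI := MeasurableSpace.generateFrom {A : Set (SSpace X) | ∃ y ∈ X₀, A = {S | y ∉ S.1}}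
      show MeasurableSet {S : SSpace X | (S.1 ∩ U).Nonempty}
      rw [hVU_eq U (hb.isOpen hUb)]
      exact MeasurableSet.biUnion (hDc.mono inter_subset_left) fun d hd =>
        (MeasurableSpace.measurableSet_generateFrom (show {S : SSpace X | d ∉ S.1} ∈ {A : Set (SSpace X) | ∃ y ∈ X₀, A = {S | y ∉ S.1}} from ⟨d, hDX₀ hd.1, rfl⟩)).compl
    · exact MeasurableSpace.measurableSet_generateFrom ⟨d, hDX₀ hdD, rfl⟩
  · rintro A ⟨y, hy, rfl⟩
    have hopen : @IsOpen (SSpace X) (STopology X) {S : SSpace X | y ∉ S.1} := by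
      have hEq : {S : SSpace X | y ∉ S.1} = {S : SSpace X | S.1 ∩ {y} = ∅} := by
        ext S; simp [Set.inter_singleton_eq_empty]
      rw [hEq]
      exact TopologicalSpace.GenerateOpen.basic _ (Or.inr ⟨{y}, isCompact_singleton, rfl⟩)
    rw [← hBorel]
    exact MeasurableSpace.measurableSet_generateFrom hopen
end

section
/- Under the assumptions that the strict-order relation is open and every point is in the closure of its strict down-set, a net (S_n) of closed lower subsets converges to S in the topology on 𝒮 if and only if S = liminf_n S_n = limsup_n S_n in the Kuratowski sense. -/
open Set TopologicalSpace

/-- Kuratowski liminf of a net of sets: points whose every open neighborhood eventually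
meets the net. -/
def netLiminf {X : Type*} [TopologicalSpace X] {D : Type*} [Preorder D]
    (Y : D → Set X) : Set X :=
  {x | ∀ U : Set X, IsOpen U → x ∈ U → ∃ m : D, ∀ n, m ≤ n → (Y n ∩ U).Nonempty}

/-- Kuratowski limsup of a net of sets: points whose every open neighborhood meets the net
cofinally often. -/
def netLimsup {X : Type*} [TopologicalSpace X] {D : Type*} [Preorder D]
    (Y : D → Set X) : Set X :=
  {x | ∀ U : Set X, IsOpen U → x ∈ U → ∀ m : D, ∃ n, m ≤ n ∧ (Y n ∩ U).Nonempty}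

/-- Under the standing assumptions, a net of closed lower sets converges to `S` in the
topology on `𝒮` if and only if `S` is its Kuratowski limit. -/
theorem sspace_tendsto_iff_kuratowski
    (X : Type*) [TopologicalSpace X] [PartialOrder X]
    {D : Type*} [Preorder D] [IsDirected D (· ≤ ·)] [Nonempty D]
    (hR : IsOpen {p : X × X | p.1 < p.2})
    (hsb : ∀ x : X, x ∈ closure {y | y < x})
    (Sn : D → SSpace X) (S : SSpace X) :
    Filter.Tendsto Sn Filter.atTop (@nhds _ (STopology X) S) ↔
      (S.1 = netLiminf (fun n => (Sn n).1) ∧ S.1 = netLimsup (fun n => (Sn n).1)) := by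
  classical
  unfold STopology
  rw [tendsto_nhds_generateFrom_iff]
  constructor
  · intro h
    have hA : ∀ U : Set X, IsOpen U → (S.1 ∩ U).Nonempty →
        ∃ m : D, ∀ n, m ≤ n → ((Sn n).1 ∩ U).Nonempty := by
      intro U hU hSU
      have := h _ (Or.inl ⟨U, hU, rfl⟩) hSU
      rw [Filter.mem_atTop_sets] at this
      obtain ⟨m, hm⟩ := this
      exact ⟨m, fun n hn => hm n hn⟩
    have hB : ∀ K : Set X, IsCompact K → S.1 ∩ K = ∅ →
        ∃ m : D, ∀ n, m ≤ n → (Sn n).1 ∩ K = ∅ := by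
      intro K hK hSK
      have := h _ (Or.inr ⟨K, hK, rfl⟩) hSK
      rw [Filter.mem_atTop_sets] at this
      obtain ⟨m, hm⟩ := this
      exact ⟨m, fun n hn => hm n hn⟩
    have h1 : S.1 ⊆ netLiminf (fun n => (Sn n).1) := fun x hx U hU hxU =>
      hA U hU ⟨x, hx, hxU⟩
    have h2 : netLiminf (fun n => (Sn n).1) ⊆ netLimsup (fun n => (Sn n).1) := by
      intro x hx U hU hxU m
      obtain ⟨m', hm'⟩ := hx U hU hxU
      obtain ⟨n, hn1, hn2⟩ := exists_ge_ge m m'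
      exact ⟨n, hn1, hm' n hn2⟩
    have h3 : netLimsup (fun n => (Sn n).1) ⊆ S.1 := by
      intro x hx
      by_contra hxS
      obtain ⟨y, hyc, hyx⟩ :=
        mem_closure_iff.1 (hsb x) _ S.2.1.isOpen_compl (hxS : x ∈ (S.1)ᶜ)
      obtain ⟨u, v, hu, hv, hyu, hxv, huv⟩ := isOpen_prod_iff.1 hR y x hyx
      obtain ⟨m, hm⟩ := hB {y} isCompact_singleton (by
        rw [Set.eq_empty_iff_forall_notMem]; rintro z ⟨hz, rfl⟩; exact hyc hz)
      obtain ⟨n, hn, z, hz, hzv⟩ := hx v hv hxv m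
      have hyz : y < z := huv (Set.mk_mem_prod hyu hzv)
      have hySn : y ∈ (Sn n).1 := (Sn n).2.2 hz hyz
      have := hm n hn
      rw [Set.eq_empty_iff_forall_notMem] at this
      exact this y ⟨hySn, rfl⟩
    exact ⟨Set.Subset.antisymm h1 (h2.trans h3),
      Set.Subset.antisymm (h1.trans h2) h3⟩
  · rintro ⟨hli, hls⟩ W hW hSW
    rcases hW with ⟨U, hU, rfl⟩ | ⟨K, hK, rfl⟩
    · obtain ⟨x, hxS, hxU⟩ := hSW
      have hx : x ∈ netLiminf (fun n => (Sn n).1) := hli ▸ hxS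
      obtain ⟨m, hm⟩ := hx U hU hxU
      rw [Filter.mem_atTop_sets]
      exact ⟨m, fun n hn => hm n hn⟩
    · have hSK : S.1 ∩ K = ∅ := hSW
      have key : ∀ x : X, ∃ (U : Set X) (m : D), IsOpen U ∧
          (x ∈ K → x ∈ U ∧ ∀ n, m ≤ n → (Sn n).1 ∩ U = ∅) := by
        intro x
        by_cases hxK : x ∈ K
        · have hxS : x ∉ S.1 := fun h =>
            Set.eq_empty_iff_forall_notMem.1 hSK x ⟨h, hxK⟩
          have hxls : x ∉ netLimsup (fun n => (Sn n).1) := fun h => hxS (hls ▸ h)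
          simp only [netLimsup, Set.mem_setOf_eq, not_forall] at hxls
          obtain ⟨U, hU, hxU, m, hm⟩ := hxls
          push_neg at hm
          refine ⟨U, m, hU, fun _ => ⟨hxU, fun n hn => ?_⟩⟩
          exact hm n hn
        · exact ⟨Set.univ, Classical.arbitrary D, isOpen_univ, fun h => absurd h hxK⟩
      choose U m hUo hprop using key
      obtain ⟨t, htK, hcover⟩ := hK.elim_nhds_subcover U
        (fun x hx => (hUo x).mem_nhds (hprop x hx).1)
      obtain ⟨M, hM⟩ := (t.image m).exists_le
      rw [Filter.mem_atTop_sets]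
      refine ⟨M, fun n hn => ?_⟩
      show (Sn n).1 ∩ K = ∅
      rw [Set.eq_empty_iff_forall_notMem]
      rintro z ⟨hzS, hzK⟩
      obtain ⟨x, hx⟩ := Set.mem_iUnion.1 (hcover hzK)
      obtain ⟨hxt, hzU⟩ := Set.mem_iUnion.1 hx
      have hmn : m x ≤ n :=
        le_trans (hM _ (Finset.mem_image_of_mem m hxt)) hn
      have := (hprop x (htK x hxt)).2 n hmn
      rw [Set.eq_empty_iff_forall_notMem] at this
      exact this z ⟨hzS, hzU⟩
end
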